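/- Let U ⊆ ℝⁿ be open and k, l positive integers. If v₁,…,v_p : U → ℝ are nonnegative functions such that each vᵢ^{1/(2kl)} is of class C^k on U, then (v₁ + … + v_p)^{1/l} is of class C^k on U. -/

import Mathlib

open Filter Asymptotics

theorem hom_zero {E F : Type} [NormedAddCommGroup E] [NormedSpace ℝ E]
    [NormedAddCommGroup F] [NormedSpace ℝ F] {f : E → F} {d : ℕ} (hd : 0 < d)
    (hhom : ∀ c : ℝ, 0 < c → ∀ y, f (c • y) = c ^ d • f y) : f 0 = 0 := by
  have h := hhom 2 (by norm_num) 0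
  rw [smul_zero] at h
  have h2 : (1 - (2:ℝ) ^ d) • f 0 = 0 := by
    rw [sub_smul, one_smul]
    rw [← h]
    exact sub_self _
  rcases smul_eq_zero.mp h2 with h3 | h3
  · exfalso
    have h4 : (2:ℝ) ^ 1 ≤ 2 ^ d := pow_le_pow_right₀ (by norm_num) hd
    simp only [pow_one] at h4
    have := sub_eq_zero.mp h3
    linarith
  · exact h3

theorem hom_bound {E F : Type} [NormedAddCommGroup E] [NormedSpace ℝ E] [ProperSpace E]
    [NormedAddCommGroup F] [NormedSpace ℝ F] {f : E → F} {d : ℕ} (hd : 0 < d)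
    (hhom : ∀ c : ℝ, 0 < c → ∀ y, f (c • y) = c ^ d • f y)
    (hcont : ContinuousOn f {0}ᶜ) :
    ∃ M : ℝ, 0 ≤ M ∧ ∀ y, ‖f y‖ ≤ M * ‖y‖ ^ d := by
  have hsub : Metric.sphere (0 : E) 1 ⊆ {0}ᶜ := by
    intro y hy
    simp only [Metric.mem_sphere, dist_zero_right] at hy
    simp only [Set.mem_compl_iff, Set.mem_singleton_iff]
    intro h
    rw [h] at hy; simp at hy
  obtain ⟨M, hM⟩ := (isCompact_sphere (0:E) 1).exists_bound_of_continuousOn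
    (hcont.mono hsub)
  refine ⟨max M 0, le_max_right _ _, fun y => ?_⟩
  by_cases hy : y = 0
  · subst hy
    rw [hom_zero hd hhom]
    simp [zero_pow hd.ne']
  · have hny : 0 < ‖y‖ := norm_pos_iff.mpr hy
    have hu : ‖y‖⁻¹ • y ∈ Metric.sphere (0:E) 1 := by
      simp [norm_smul, abs_of_pos (inv_pos.mpr hny), inv_mul_cancel₀ hny.ne']
    have key : f y = ‖y‖ ^ d • f (‖y‖⁻¹ • y) := by
      have h := hhom ‖y‖ hny (‖y‖⁻¹ • y)
      rw [smul_smul, mul_inv_cancel₀ hny.ne', one_smul] at h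
      exact h
    rw [key, norm_smul]
    have h1 : ‖f (‖y‖⁻¹ • y)‖ ≤ M := hM _ hu
    have h2 : ‖(‖y‖ ^ d : ℝ)‖ = ‖y‖ ^ d := by
      rw [Real.norm_eq_abs, abs_of_nonneg (by positivity)]
    rw [h2, mul_comm (max M 0)]
    apply mul_le_mul_of_nonneg_left _ (by positivity)
    exact h1.trans (le_max_left _ _)

theorem hom_contDiff {E : Type} [NormedAddCommGroup E] [NormedSpace ℝ E] [ProperSpace E] :
    ∀ (k : ℕ) {F : Type} [NormedAddCommGroup F] [NormedSpace ℝ F]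
      (f : E → F) (d : ℕ), k < d →
      (∀ c : ℝ, 0 < c → ∀ y, f (c • y) = c ^ d • f y) →
      ContDiffOn ℝ k f {0}ᶜ → ContDiff ℝ k f := by
  intro k
  induction k with
  | zero =>
    intro F _ _ f d hkd hhom hf
    rw [show ((0:ℕ) : WithTop ℕ∞) = 0 from rfl, contDiff_zero]
    obtain ⟨M, hM0, hM⟩ := hom_bound hkd hhom hf.continuousOn
    rw [continuous_iff_continuousAt]
    intro y
    by_cases hy : y = 0
    · subst hy
      have h0 : f 0 = 0 := hom_zero hkd hhom
      rw [ContinuousAt, h0]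
      apply squeeze_zero_norm hM
      have h : Filter.Tendsto (fun y : E => M * ‖y‖ ^ d) (nhds 0) (nhds (M * ‖(0:E)‖ ^ d)) :=
        Filter.Tendsto.const_mul _ ((continuous_norm.pow d).tendsto 0)
      simpa [zero_pow hkd.ne'] using h
    · exact hf.continuousOn.continuousAt (isOpen_compl_singleton.mem_nhds hy)
  | succ k ih =>
    intro F _ _ f d hkd hhom hf
    obtain ⟨M, hM0, hM⟩ := hom_bound (by omega) hhom hf.continuousOn
    have hdiff0 : HasFDerivAt f (0 : E →L[ℝ] F) 0 := by
      rw [hasFDerivAt_iff_isLittleO_nhds_zero, isLittleO_iff]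
      intro c hc
      have htend : Filter.Tendsto (fun y : E => M * ‖y‖ ^ (d - 1)) (nhds 0) (nhds 0) := by
        have h : Filter.Tendsto (fun y : E => M * ‖y‖ ^ (d-1)) (nhds 0)
            (nhds (M * ‖(0:E)‖ ^ (d-1))) :=
          Filter.Tendsto.const_mul _ ((continuous_norm.pow (d-1)).tendsto 0)
        simpa [zero_pow (by omega : d - 1 ≠ 0)] using h
      filter_upwards [htend.eventually_le_const hc] with y hy
      have h0 : f 0 = 0 := hom_zero (by omega) hhom
      simp only [zero_add, add_zero, h0, sub_zero, ContinuousLinearMap.zero_apply]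
      calc ‖f y‖ ≤ M * ‖y‖ ^ d := hM y
        _ = (M * ‖y‖ ^ (d-1)) * ‖y‖ := by
            rw [mul_assoc, ← pow_succ]
            congr 2
            omega
        _ ≤ c * ‖y‖ := mul_le_mul_of_nonneg_right hy (norm_nonneg _)
    have hdiffble : Differentiable ℝ f := by
      intro y
      by_cases hy : y = 0
      · subst hy; exact hdiff0.differentiableAt
      · exact (hf.differentiableOn (by simp)).differentiableAt
          (isOpen_compl_singleton.mem_nhds hy)
    have hhom' : ∀ c : ℝ, 0 < c → ∀ y, fderiv ℝ f (c • y) = c ^ (d-1) • fderiv ℝ f y := by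
      intro c hc y
      by_cases hy : y = 0
      · subst hy
        rw [smul_zero, hdiff0.fderiv, smul_zero]
      · have h1 : HasFDerivAt (fun x => f (c • x))
            ((fderiv ℝ f (c • y)).comp (c • ContinuousLinearMap.id ℝ E)) y := by
          apply HasFDerivAt.comp
          · exact (hdiffble (c • y)).hasFDerivAt
          · exact (hasFDerivAt_id y).const_smul c
        have h2 : HasFDerivAt (fun x => f (c • x)) (c ^ d • fderiv ℝ f y) y := by
          have heq : (fun x => f (c • x)) = fun x => c ^ d • f x := funext (hhom c hc)
          rw [heq]
          exact (hdiffble y).hasFDerivAt.const_smul _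
        have h3 := h1.unique h2
        have h4 : (fderiv ℝ f (c • y)).comp (c • ContinuousLinearMap.id ℝ E)
            = c • fderiv ℝ f (c • y) := by
          ext z
          simp [smul_comm]
        rw [h4] at h3
        have h5 : c⁻¹ • (c • fderiv ℝ f (c • y)) = c⁻¹ • (c ^ d • fderiv ℝ f y) := by rw [h3]
        rw [smul_smul, smul_smul, inv_mul_cancel₀ hc.ne', one_smul] at h5
        have hcd : c⁻¹ * c ^ d = c ^ (d-1) := by
          have he : c ^ d = c * c ^ (d-1) := by rw [← pow_succ']; congr 1; omega
          rw [he, inv_mul_cancel_left₀ hc.ne']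
        rw [h5, hcd]
    have hfd : ContDiff ℝ k (fderiv ℝ f) := by
      apply ih (fderiv ℝ f) (d-1) (by omega) hhom'
      apply hf.fderiv_of_isOpen isOpen_compl_singleton
      exact_mod_cast le_refl (k+1 : ℕ)
    rw [show ((k+1:ℕ) : WithTop ℕ∞) = (k : WithTop ℕ∞) + 1 by push_cast; rfl,
      contDiff_succ_iff_fderiv]
    refine ⟨hdiffble, ?_, hfd⟩
    intro h
    exfalso
    exact (WithTop.natCast_ne_top k) h

theorem stmt_7 (n p k l : ℕ) (hk : 0 < k) (hl : 0 < l)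
    (U : Set (Fin n → ℝ)) (hU : IsOpen U)
    (v : Fin p → (Fin n → ℝ) → ℝ)
    (hnonneg : ∀ i, ∀ x ∈ U, 0 ≤ v i x)
    (hv : ∀ i, ContDiffOn ℝ k (fun x => (v i x) ^ ((1 : ℝ) / (2 * k * l))) U) :
    ContDiffOn ℝ k (fun x => (∑ i, v i x) ^ ((1 : ℝ) / l)) U := by
  set m := k * l with hm
  set h : (Fin p → ℝ) → ℝ := fun y => (∑ i, (y i) ^ (2 * m)) ^ ((1:ℝ)/l) with hh
  have hterm_nonneg : ∀ (y : Fin p → ℝ) (i : Fin p), 0 ≤ (y i) ^ (2 * m) := by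
    intro y i
    rw [mul_comm, pow_mul]
    positivity
  have hhsmooth : ContDiff ℝ k h := by
    apply hom_contDiff k h (2 * k) (by omega)
    · intro c hc y
      simp only [hh, Pi.smul_apply, smul_eq_mul]
      have hsum : ∑ i, (c * y i) ^ (2*m) = c ^ (2*m) * ∑ i, (y i) ^ (2*m) := by
        rw [Finset.mul_sum]
        congr 1
        ext i
        ring
      rw [hsum, Real.mul_rpow (by positivity) (Finset.sum_nonneg fun i _ => hterm_nonneg y i)]
      congr 1
      rw [← Real.rpow_natCast c (2*m), ← Real.rpow_mul hc.le]
      have he : ((2*m : ℕ) : ℝ) * ((1:ℝ)/l) = ((2*k : ℕ) : ℝ) := by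
        have hl' : (l:ℝ) ≠ 0 := Nat.cast_ne_zero.mpr hl.ne'
        push_cast [hm]
        field_simp
      rw [he, Real.rpow_natCast]
    · intro y hy
      have hs : ContDiff ℝ k (fun y : Fin p → ℝ => ∑ i, (y i) ^ (2*m)) :=
        ContDiff.sum fun i _ => (contDiff_apply ℝ ℝ i).pow _
      obtain ⟨j, hj⟩ := Function.ne_iff.mp hy
      have hj' : (0:ℝ) ≠ y j := by simpa [eq_comm] using hj
      have hpos : 0 < ∑ i, (y i) ^ (2*m) := by
        apply Finset.sum_pos' (fun i _ => hterm_nonneg y i)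
        refine ⟨j, Finset.mem_univ j, ?_⟩
        have h2 : 0 < (y j)^2 := (sq_nonneg _).lt_of_ne (Ne.symm (pow_ne_zero 2 (by simpa using hj)))
        rw [pow_mul]
        exact pow_pos h2 m
      exact (hs.contDiffAt.rpow_const_of_ne hpos.ne').contDiffWithinAt
  have hG : ContDiffOn ℝ k (fun x => fun i => (v i x) ^ ((1:ℝ)/(2*k*l))) U :=
    contDiffOn_pi.2 hv
  apply (hhsmooth.comp_contDiffOn hG).congr
  intro x hx
  simp only [hh]
  congr 1
  apply Finset.sum_congr rfl
  intro i _
  have ha : 0 ≤ v i x := hnonneg i x hx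
  rw [← Real.rpow_natCast ((v i x) ^ ((1:ℝ)/(2*k*l))) (2*m), ← Real.rpow_mul ha]
  have he : (1:ℝ)/(2*k*l) * ((2*m : ℕ) : ℝ) = 1 := by
    have hk' : (k:ℝ) ≠ 0 := Nat.cast_ne_zero.mpr hk.ne'
    have hl' : (l:ℝ) ≠ 0 := Nat.cast_ne_zero.mpr hl.ne'
    push_cast [hm]
    field_simp
  rw [he, Real.rpow_one]
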